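/- arXiv:0709.4681 — 4 statements merged into one kernel-verified Lean document; each statement's English description precedes it below -/
import Mathlib

section
/- Let p > 0 and let x, y ∈ ℝ^n with |x| = 1 and |y| < 1/2. Then |x+y|^{-p} + |x-y|^{-p} - 2 ≥ p ( -|y|^2 + (1/2)(p+2) ⟨x,y⟩^2 - (1/4)(p+2)(p+4) ⟨x,y⟩^2 |y|^2 ), where ⟨x,y⟩ denotes the inner product (when x = e_1 this is y_1). -/
open Real Set

/-- Bernoulli for negative exponents: `u^(-r) ≥ 1 - r(u-1)` for `u > 0`, `r ≥ 0`. -/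
lemma bern_neg {r u : ℝ} (hr : 0 ≤ r) (hu : 0 < u) :
    1 - r * (u - 1) ≤ u ^ (-r) := by
  rcases le_or_gt r 1 with hr1 | hr1
  · -- use (1+s)^r ≤ 1 + r s
    have hs : (-1 : ℝ) ≤ u - 1 := by linarith
    have h := rpow_one_add_le_one_add_mul_self hs hr hr1
    rw [show (1 : ℝ) + (u - 1) = u by ring] at h
    have hpos : (0:ℝ) < 1 + r * (u - 1) := by
      rcases le_or_gt 1 u with h' | h'
      · nlinarith
      · nlinarith
    have hupos : (0:ℝ) < u ^ r := rpow_pos_of_pos hu r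
    have hinv : (1 + r * (u - 1))⁻¹ ≤ (u ^ r)⁻¹ := by
      exact inv_anti₀ hupos h
    have h2 : 1 - r * (u - 1) ≤ (1 + r * (u - 1))⁻¹ := by
      rw [show (1 + r * (u - 1))⁻¹ = 1 / (1 + r * (u - 1)) by rw [one_div],
        le_div_iff₀ hpos]
      nlinarith [sq_nonneg (r * (u - 1))]
    calc 1 - r * (u - 1) ≤ (1 + r * (u - 1))⁻¹ := h2
      _ ≤ (u ^ r)⁻¹ := hinv
      _ = u ^ (-r) := (rpow_neg hu.le r).symm
  · -- use (1+s)^r ≥ 1 + r s with s = 1/u - 1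
    have hs : (-1 : ℝ) ≤ u⁻¹ - 1 := by
      have : (0:ℝ) < u⁻¹ := inv_pos.mpr hu
      linarith
    have h := one_add_mul_self_le_rpow_one_add hs hr1.le
    rw [show (1 : ℝ) + (u⁻¹ - 1) = u⁻¹ by ring] at h
    have hui : (u⁻¹ : ℝ) ^ r = u ^ (-r) := by
      rw [Real.inv_rpow hu.le, ← Real.rpow_neg hu.le]
    rw [hui] at h
    have key : 1 - r * (u - 1) ≤ 1 + r * (u⁻¹ - 1) := by
      have h2 : u⁻¹ - 1 + (u - 1) ≥ 0 := by
        have hu' : u⁻¹ = 1 / u := by ring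
        rw [hu', ge_iff_le, ← sub_nonneg]
        field_simp
        nlinarith [sq_nonneg (u - 1)]
      nlinarith
    linarith

/-- Third-order Taylor lower bound for `u ^ (-q)` at `u = 1`. -/
lemma cubic_bound {q : ℝ} (hq : 0 < q) {u : ℝ} (hu : 0 < u) :
    1 - q * (u - 1) + q * (q + 1) / 2 * (u - 1) ^ 2
      - q * (q + 1) * (q + 2) / 6 * (u - 1) ^ 3 ≤ u ^ (-q) := by
  set g : ℝ → ℝ := fun u => u ^ (-q) - 1 + q * (u - 1) - q * (q + 1) / 2 * (u - 1) ^ 2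
      + q * (q + 1) * (q + 2) / 6 * (u - 1) ^ 3 with hg_def
  set g1 : ℝ → ℝ := fun u => -q * u ^ (-q - 1) + q - q * (q + 1) * (u - 1)
      + q * (q + 1) * (q + 2) / 2 * (u - 1) ^ 2 with hg1_def
  set g2 : ℝ → ℝ := fun u => -q * ((-q - 1) * u ^ (-q - 2)) - q * (q + 1)
      + q * (q + 1) * (q + 2) * (u - 1) with hg2_def
  have hds : ∀ v : ℝ, HasDerivAt (fun w : ℝ => w - 1) 1 v :=
    fun v => (hasDerivAt_id v).sub_const 1
  have hg1 : ∀ v ∈ Ioi (0:ℝ), HasDerivAt g (g1 v) v := by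
    intro v hv
    have h1 : HasDerivAt (fun w : ℝ => w ^ (-q)) (-q * v ^ (-q - 1)) v :=
      Real.hasDerivAt_rpow_const (Or.inl (ne_of_gt hv))
    have h2 : HasDerivAt (fun w : ℝ => (w - 1) ^ 2) (2 * (v - 1)) v := by
      simpa using (hds v).fun_pow 2
    have h3 : HasDerivAt (fun w : ℝ => (w - 1) ^ 3) (3 * (v - 1) ^ 2) v := by
      simpa using (hds v).fun_pow 3
    have := ((((h1.sub_const 1).add ((hds v).const_mul q)).sub
        (h2.const_mul (q * (q + 1) / 2))).add (h3.const_mul (q * (q + 1) * (q + 2) / 6)))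
    refine this.congr_deriv ?_
    simp only [hg1_def]
    ring
  have hg2 : ∀ v ∈ Ioi (0:ℝ), HasDerivAt g1 (g2 v) v := by
    intro v hv
    have h1 : HasDerivAt (fun w : ℝ => w ^ (-q - 1)) ((-q - 1) * v ^ (-q - 1 - 1)) v :=
      Real.hasDerivAt_rpow_const (Or.inl (ne_of_gt hv))
    have h2 : HasDerivAt (fun w : ℝ => (w - 1) ^ 2) (2 * (v - 1)) v := by
      simpa using (hds v).fun_pow 2
    have := (((h1.const_mul (-q)).add_const q).sub ((hds v).const_mul (q * (q + 1)))).add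
        (h2.const_mul (q * (q + 1) * (q + 2) / 2))
    refine this.congr_deriv ?_
    simp only [hg2_def]
    have : (-q - 1 - 1 : ℝ) = -q - 2 := by ring
    rw [this]
    ring
  have hg2_nonneg : ∀ v ∈ Ioi (0:ℝ), 0 ≤ g2 v := by
    intro v hv
    have hb := bern_neg (r := q + 2) (by linarith) (show (0:ℝ) < v from hv)
    have hrw : v ^ (-(q + 2)) = v ^ (-q - 2) := by ring_nf
    rw [hrw] at hb
    simp only [hg2_def]
    nlinarith [mul_nonneg (mul_nonneg hq.le (by linarith : (0:ℝ) ≤ q + 1))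
      (sub_nonneg.mpr hb)]
  -- g1 is monotone on Ioi 0
  have hg1_mono : MonotoneOn g1 (Ioi (0:ℝ)) := by
    apply monotoneOn_of_deriv_nonneg (convex_Ioi 0)
    · exact fun v hv => (hg2 v hv).continuousAt.continuousWithinAt
    · intro v hv
      rw [interior_Ioi] at hv
      exact (hg2 v hv).differentiableAt.differentiableWithinAt
    · intro v hv
      rw [interior_Ioi] at hv
      rw [(hg2 v hv).deriv]
      exact hg2_nonneg v hv
  have hg1_one : g1 1 = 0 := by
    simp only [hg1_def]
    rw [Real.one_rpow]
    ring
  have h1mem : (1:ℝ) ∈ Ioi (0:ℝ) := by norm_num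
  -- g is antitone on Ioc 0 1 and monotone on Ici 1
  have hanti : AntitoneOn g (Ioc (0:ℝ) 1) := by
    apply antitoneOn_of_deriv_nonpos (convex_Ioc 0 1)
    · intro v hv
      exact (hg1 v hv.1).continuousAt.continuousWithinAt
    · intro v hv
      rw [interior_Ioc] at hv
      exact (hg1 v hv.1).differentiableAt.differentiableWithinAt
    · intro v hv
      rw [interior_Ioc] at hv
      rw [(hg1 v hv.1).deriv]
      rw [← hg1_one]
      exact hg1_mono hv.1 h1mem hv.2.le
  have hmono : MonotoneOn g (Ici (1:ℝ)) := by
    apply monotoneOn_of_deriv_nonneg (convex_Ici 1)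
    · intro v hv
      exact (hg1 v (Set.mem_Ioi.mpr (lt_of_lt_of_le (zero_lt_one : (0:ℝ) < 1) hv))).continuousAt.continuousWithinAt
    · intro v hv
      rw [interior_Ici] at hv
      exact (hg1 v (Set.mem_Ioi.mpr (lt_trans (zero_lt_one : (0:ℝ) < 1) hv))).differentiableAt.differentiableWithinAt
    · intro v hv
      rw [interior_Ici] at hv
      rw [(hg1 v (Set.mem_Ioi.mpr (lt_trans (zero_lt_one : (0:ℝ) < 1) hv))).deriv]
      rw [← hg1_one]
      exact hg1_mono h1mem (Set.mem_Ioi.mpr (lt_trans (zero_lt_one : (0:ℝ) < 1) hv)) hv.le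
  have hg_one : g 1 = 0 := by
    simp only [hg_def]
    rw [Real.one_rpow]
    ring
  have hpos : 0 ≤ g u := by
    rcases le_total u 1 with h | h
    · have := hanti (show u ∈ Ioc (0:ℝ) 1 from ⟨hu, h⟩)
        (show (1:ℝ) ∈ Ioc (0:ℝ) 1 by constructor <;> norm_num) h
      rw [hg_one] at this
      exact this
    · have := hmono (show (1:ℝ) ∈ Ici (1:ℝ) from Set.mem_Ici.mpr le_rfl)
        (show u ∈ Ici (1:ℝ) from h) h
      rw [hg_one] at this
      exact this
  simp only [hg_def] at hpos
  linarith

theorem stmt_2 (n : ℕ) (p : ℝ) (hp : p > 0)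
    (x y : EuclideanSpace ℝ (Fin n)) (hx : ‖x‖ = 1) (hy : ‖y‖ < 1 / 2) :
    ‖x + y‖ ^ (-p) + ‖x - y‖ ^ (-p) - 2 ≥
      p * (-‖y‖ ^ 2 + (1 / 2) * (p + 2) * (inner ℝ x y : ℝ) ^ 2
        - (1 / 4) * (p + 2) * (p + 4) * (inner ℝ x y : ℝ) ^ 2 * ‖y‖ ^ 2) := by
  set a : ℝ := (inner ℝ x y : ℝ) with ha_def
  set T : ℝ := ‖y‖ ^ 2 with hT_def
  have hT0 : 0 ≤ T := sq_nonneg _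
  have haT : a ^ 2 ≤ T := by
    have h := abs_real_inner_le_norm x y
    rw [hx, one_mul] at h
    calc a ^ 2 = |a| ^ 2 := (sq_abs a).symm
      _ ≤ ‖y‖ ^ 2 := by
          apply pow_le_pow_left₀ (abs_nonneg a) h
  -- positivity of the norms
  have hxy1 : 1 / 2 < ‖x + y‖ := by
    have h1 : ‖x‖ ≤ ‖x + y‖ + ‖y‖ := by
      calc ‖x‖ = ‖x + y - y‖ := by rw [add_sub_cancel_right]
        _ ≤ ‖x + y‖ + ‖y‖ := norm_sub_le _ _
    rw [hx] at h1; linarith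
  have hxy2 : 1 / 2 < ‖x - y‖ := by
    have h1 : ‖x‖ ≤ ‖x - y‖ + ‖y‖ := by
      calc ‖x‖ = ‖x - y + y‖ := by rw [sub_add_cancel]
        _ ≤ ‖x - y‖ + ‖y‖ := norm_add_le _ _
    rw [hx] at h1; linarith
  have hu2 : ‖x + y‖ ^ 2 = 1 + 2 * a + T := by
    rw [norm_add_sq_real, hx]; ring
  have hv2 : ‖x - y‖ ^ 2 = 1 - 2 * a + T := by
    rw [norm_sub_sq_real, hx]; ring
  have hupos : (0:ℝ) < 1 + 2 * a + T := by rw [← hu2]; positivity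
  have hvpos : (0:ℝ) < 1 - 2 * a + T := by rw [← hv2]; positivity
  -- rewrite the rpow
  have key : ∀ z : EuclideanSpace ℝ (Fin n), 0 < ‖z‖ →
      ‖z‖ ^ (-p) = (‖z‖ ^ 2) ^ (-(p / 2)) := by
    intro z hz
    rw [← Real.rpow_natCast_mul (norm_nonneg z) 2 (-(p / 2))]
    congr 1
    push_cast
    ring
  rw [key _ (by linarith), key _ (by linarith), hu2, hv2]
  have hq : (0:ℝ) < p / 2 := by linarith
  rcases le_or_gt ((p + 4) * T) 2 with hcase | hcase
  · -- small T case: cubic Taylor bound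
    have Bu := cubic_bound hq hupos
    have Bv := cubic_bound hq hvpos
    have h1 : 0 ≤ p * (p + 2) * T ^ 2 * (6 - (p + 4) * T) := by
      apply mul_nonneg
      apply mul_nonneg
      apply mul_nonneg (by linarith) (by linarith)
      exact sq_nonneg T
      linarith
    have h2 : 0 ≤ p * (p + 2) * a ^ 2 * (2 - (p + 4) * T) := by
      apply mul_nonneg
      apply mul_nonneg
      apply mul_nonneg (by linarith) (by linarith)
      exact sq_nonneg a
      linarith
    linarith [Bu, Bv, h1, h2]
  · -- large T case: Bernoulli suffices
    have Bu := bern_neg (r := p / 2) hq.le hupos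
    have Bv := bern_neg (r := p / 2) hq.le hvpos
    have h3 : 0 ≤ p * (p + 2) * a ^ 2 * ((p + 4) * T - 2) := by
      apply mul_nonneg
      apply mul_nonneg
      apply mul_nonneg (by linarith) (by linarith)
      exact sq_nonneg a
      linarith
    linarith [Bu, Bv, h3]
end

section
/- Let Γ : ℝ^n → ℝ be concave on the ball B_r (centered at origin), let x ∈ B_{r/2}, h > 0, and suppose that the set A = { y ∈ B_r \ B_{r/2} : Γ(y) < Γ(x) + ⟨y - x, v⟩ - h } satisfies |A| ≤ ε |B_r \ B_{r/2}| for a sufficiently small dimensional constant ε > 0, where v is an element of the superdifferential of Γ at x. Then Γ(y) ≥ Γ(x) + ⟨y - x, v⟩ - h for every y ∈ B_{r/2}. -/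
open MeasureTheory Metric

set_option maxHeartbeats 1000000

theorem stmt_4 (n : ℕ) :
    ∃ ε : ℝ, ε > 0 ∧
      ∀ (r : ℝ), 0 < r →
      ∀ (Γ : EuclideanSpace ℝ (Fin n) → ℝ),
        ConcaveOn ℝ (ball (0 : EuclideanSpace ℝ (Fin n)) r) Γ →
      ∀ x ∈ ball (0 : EuclideanSpace ℝ (Fin n)) (r / 2),
      ∀ (h : ℝ), 0 < h →
      ∀ (v : EuclideanSpace ℝ (Fin n)),
        (∀ z ∈ ball (0 : EuclideanSpace ℝ (Fin n)) r,
          Γ z ≤ Γ x + (inner ℝ (z - x) v : ℝ)) →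
        volume {y | y ∈ ball (0 : EuclideanSpace ℝ (Fin n)) r \ ball 0 (r / 2) ∧
            Γ y < Γ x + (inner ℝ (y - x) v : ℝ) - h} ≤
          ENNReal.ofReal ε *
            volume (ball (0 : EuclideanSpace ℝ (Fin n)) r \ ball 0 (r / 2)) →
      ∀ y ∈ ball (0 : EuclideanSpace ℝ (Fin n)) (r / 2),
        Γ y ≥ Γ x + (inner ℝ (y - x) v : ℝ) - h := by
  refine ⟨(1/40 : ℝ)^n / 4, by positivity, ?_⟩
  intro r hr Γ hΓ x hx h hh v hv hA y hy
  by_cases hn : n = 0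
  · subst hn
    have hyx : y = x := Subsingleton.elim y x
    rw [hyx, sub_self, inner_zero_left]
    linarith
  -- main case: n ≥ 1
  haveI : Nonempty (Fin n) := Fin.pos_iff_nonempty.1 (Nat.pos_of_ne_zero hn)
  have hyr : ‖y‖ < r / 2 := by simpa [mem_ball_zero_iff] using hy
  -- a unit vector in the direction of y
  obtain ⟨u, hu1, hyu⟩ : ∃ u : EuclideanSpace ℝ (Fin n), ‖u‖ = 1 ∧ y = ‖y‖ • u := by
    by_cases hy0 : y = 0
    · refine ⟨EuclideanSpace.single (Classical.arbitrary (Fin n)) 1, ?_, ?_⟩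
      · simp [EuclideanSpace.norm_single]
      · simp [hy0]
    · refine ⟨‖y‖⁻¹ • y, ?_, ?_⟩
      · rw [norm_smul, norm_inv, norm_norm, inv_mul_cancel₀ (norm_ne_zero_iff.2 hy0)]
      · rw [smul_inv_smul₀ (norm_ne_zero_iff.2 hy0)]
  set l : ℝ := (‖y‖ + 3*r/4)/(3*r/2) with hl_def
  have h32 : (0:ℝ) < 3*r/2 := by linarith
  have hl_lb : (1/2 : ℝ) ≤ l := by
    rw [hl_def, le_div_iff₀ h32]
    have := norm_nonneg y
    linarith
  have hl_ub : l < 5/6 := by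
    rw [hl_def, div_lt_iff₀ h32]
    linarith
  have h1l : (0:ℝ) < 1 - l := by linarith
  set c : ℝ := l / (1 - l) with hc_def
  have hc1 : (1:ℝ) ≤ c := by rw [hc_def, le_div_iff₀ h1l]; linarith
  have hc5 : c < 5 := by rw [hc_def, div_lt_iff₀ h1l]; linarith
  have hc0 : c ≠ 0 := by linarith
  set p : EuclideanSpace ℝ (Fin n) := (3*r/4) • u with hp_def
  set q : EuclideanSpace ℝ (Fin n) := (-(3*r/4)) • u with hq_def
  have hpnorm : ‖p‖ = 3*r/4 := by
    rw [hp_def, norm_smul, hu1, mul_one, Real.norm_eq_abs, abs_of_pos (by linarith)]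
  have hqnorm : ‖q‖ = 3*r/4 := by
    rw [hq_def, norm_smul, hu1, mul_one, Real.norm_eq_abs, abs_neg, abs_of_pos (by linarith)]
  have hkey : l * (3*r/4) + (1-l) * (-(3*r/4)) = ‖y‖ := by
    rw [hl_def]; field_simp; ring
  have hy_comb : l • p + (1-l) • q = y := by
    calc l • p + (1-l) • q = (l * (3*r/4) + (1-l) * (-(3*r/4))) • u := by
          rw [hp_def, hq_def, smul_smul, smul_smul, add_smul]
      _ = ‖y‖ • u := by rw [hkey]
      _ = y := hyu.symm
  set A : Set (EuclideanSpace ℝ (Fin n)) :=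
    {w | w ∈ ball (0 : EuclideanSpace ℝ (Fin n)) r \ ball 0 (r / 2) ∧
        Γ w < Γ x + (inner ℝ (w - x) v : ℝ) - h} with hA_def
  set T : EuclideanSpace ℝ (Fin n) → EuclideanSpace ℝ (Fin n) :=
    fun z => q - c • (z - p) with hT_def
  have hlc : (1 - l) * c = l := by rw [hc_def]; field_simp
  -- measure of T ⁻¹' A
  have hTpre : volume (T ⁻¹' A) ≤ volume A := by
    have hTeq : T ⁻¹' A = (((-c) • ·) :
        EuclideanSpace ℝ (Fin n) → _) ⁻¹' (((q + c • p) + ·) ⁻¹' A) := by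
      ext z
      simp only [Set.mem_preimage, hT_def]
      have : q - c • (z - p) = (q + c • p) + (-c) • z := by
        rw [smul_sub, neg_smul]; abel
      rw [this]
    rw [hTeq, Measure.addHaar_preimage_smul volume (by simpa using hc0),
      measure_preimage_add, finrank_euclideanSpace_fin]
    have h1 : ENNReal.ofReal |((-c) ^ n)⁻¹| ≤ 1 := by
      rw [ENNReal.ofReal_le_one]
      rw [abs_inv, abs_pow, abs_neg, abs_of_pos (by linarith)]
      exact inv_le_one_of_one_le₀ (one_le_pow₀ hc1)
    calc ENNReal.ofReal |((-c) ^ n)⁻¹| * volume A ≤ 1 * volume A :=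
          mul_le_mul_left h1 _
      _ = volume A := one_mul _
  -- find a good point z
  obtain ⟨z, hzball, hzA, hzTA⟩ : ∃ z ∈ ball p (r/40), z ∉ A ∧ T z ∉ A := by
    by_contra hcon
    push_neg at hcon
    have hsub : ball p (r/40) ⊆ A ∪ T ⁻¹' A := by
      intro z hz
      rcases Classical.em (z ∈ A) with hzA | hzA
      · exact Or.inl hzA
      · exact Or.inr (hcon z hz hzA)
    set V := volume (ball (0 : EuclideanSpace ℝ (Fin n)) 1) with hV_def
    have hV0 : V ≠ 0 := (measure_ball_pos volume 0 one_pos).ne'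
    have hVtop : V ≠ ⊤ := measure_ball_lt_top.ne
    have hballp : volume (ball p (r/40)) = ENNReal.ofReal ((r/40)^n) * V := by
      rw [Measure.addHaar_ball volume p (by linarith : (0:ℝ) ≤ r/40),
        finrank_euclideanSpace_fin]
    have hballr : volume (ball (0 : EuclideanSpace ℝ (Fin n)) r)
        = ENNReal.ofReal (r^n) * V := by
      rw [Measure.addHaar_ball volume 0 hr.le, finrank_euclideanSpace_fin]
    have hAle : volume A ≤ ENNReal.ofReal ((1/40:ℝ)^n/4) * (ENNReal.ofReal (r^n) * V) := by
      refine le_trans hA ?_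
      refine mul_le_mul_right ?_ _
      rw [← hballr]
      exact measure_mono Set.diff_subset
    have hchain : ENNReal.ofReal ((r/40)^n) * V ≤ ENNReal.ofReal ((r/40)^n/2) * V := by
      calc ENNReal.ofReal ((r/40)^n) * V = volume (ball p (r/40)) := hballp.symm
        _ ≤ volume (A ∪ T ⁻¹' A) := measure_mono hsub
        _ ≤ volume A + volume (T ⁻¹' A) := measure_union_le _ _
        _ ≤ volume A + volume A := add_le_add (le_refl _) hTpre
        _ = 2 * volume A := (two_mul _).symm
        _ ≤ 2 * (ENNReal.ofReal ((1/40:ℝ)^n/4) * (ENNReal.ofReal (r^n) * V)) := by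
            exact mul_le_mul_right hAle _
        _ = ENNReal.ofReal ((r/40)^n/2) * V := by
            rw [← mul_assoc, ← mul_assoc, ← ENNReal.ofReal_ofNat,
              ← ENNReal.ofReal_mul (by norm_num), ← ENNReal.ofReal_mul (by positivity)]
            congr 2
            rw [div_pow, div_pow, one_pow]
            ring
    have hle : ((r/40:ℝ))^n ≤ (r/40)^n/2 := by
      have := (ENNReal.mul_le_mul_iff_left hV0 hVtop).1 hchain
      exact (ENNReal.ofReal_le_ofReal_iff (by positivity)).1 this
    have : (0:ℝ) < (r/40)^n := by positivity
    linarith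
  -- geometric facts about z and T z
  have hzp : ‖z - p‖ < r/40 := by
    rw [← dist_eq_norm]; exact mem_ball.1 hzball
  have hz_ann : z ∈ ball (0 : EuclideanSpace ℝ (Fin n)) r \ ball 0 (r/2) := by
    have h2 : ‖z‖ ≤ ‖p‖ + ‖z - p‖ := by simpa using norm_add_le p (z - p)
    rw [hpnorm] at h2
    constructor
    · rw [mem_ball_zero_iff]; linarith
    · intro hmem
      rw [mem_ball_zero_iff] at hmem
      have h1 : ‖p‖ - ‖z‖ ≤ ‖p - z‖ := norm_sub_norm_le p z
      rw [norm_sub_rev p z, hpnorm] at h1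
      linarith
  have hTzq : ‖T z - q‖ < r/8 := by
    have : T z - q = -(c • (z - p)) := by show q - c • (z - p) - q = _; abel
    rw [this, norm_neg, norm_smul, Real.norm_eq_abs, abs_of_pos (by linarith : (0:ℝ) < c)]
    calc c * ‖z - p‖ ≤ 5 * ‖z - p‖ :=
          mul_le_mul_of_nonneg_right hc5.le (norm_nonneg _)
      _ < 5 * (r/40) := by linarith
      _ = r/8 := by ring
  have hTz_ann : T z ∈ ball (0 : EuclideanSpace ℝ (Fin n)) r \ ball 0 (r/2) := by
    have h2 : ‖T z‖ ≤ ‖q‖ + ‖T z - q‖ := by simpa using norm_add_le q (T z - q)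
    rw [hqnorm] at h2
    constructor
    · rw [mem_ball_zero_iff]; linarith
    · intro hmem
      rw [mem_ball_zero_iff] at hmem
      have h1 : ‖q‖ - ‖T z‖ ≤ ‖q - T z‖ := norm_sub_norm_le q (T z)
      rw [norm_sub_rev q (T z), hqnorm] at h1
      linarith
  -- from z ∉ A and T z ∉ A, get the lower bounds
  have hzgood : Γ z ≥ Γ x + (inner ℝ (z - x) v : ℝ) - h := by
    by_contra hcon
    push_neg at hcon
    exact hzA ⟨hz_ann, hcon⟩
  have hTzgood : Γ (T z) ≥ Γ x + (inner ℝ (T z - x) v : ℝ) - h := by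
    by_contra hcon
    push_neg at hcon
    exact hzTA ⟨hTz_ann, hcon⟩
  -- y is the convex combination l • z + (1-l) • T z
  have hcomb : l • z + (1-l) • T z = y := by
    have h1 : (1-l) • (c • (z - p)) = l • (z - p) := by rw [smul_smul, hlc]
    have h2 : T z = q - c • (z - p) := by rw [hT_def]
    calc l • z + (1-l) • T z
        = l • z + ((1-l) • q - (1-l) • (c • (z - p))) := by rw [h2, smul_sub (1-l) q]
      _ = l • z + (1-l) • q - l • (z - p) := by rw [h1]; abel
      _ = l • p + (1-l) • q := by rw [smul_sub l z p]; abel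
      _ = y := hy_comb
  -- concavity
  have hconc : l * Γ z + (1-l) * Γ (T z) ≤ Γ y := by
    have := hΓ.2 hz_ann.1 hTz_ann.1 (by linarith : (0:ℝ) ≤ l)
      (by linarith : (0:ℝ) ≤ 1 - l) (by ring)
    rw [hcomb] at this
    rw [smul_eq_mul, smul_eq_mul] at this
    exact this
  -- inner product identity
  have hinner : (inner ℝ (y - x) v : ℝ)
      = l * (inner ℝ (z - x) v : ℝ) + (1-l) * (inner ℝ (T z - x) v : ℝ) := by
    rw [← hcomb]
    simp only [inner_sub_left, inner_add_left, real_inner_smul_left]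
    ring
  rw [ge_iff_le, hinner]
  nlinarith [hzgood, hTzgood, hconc, hl_lb, hl_ub, hh]
end

section
/- Let f ∈ L^∞(ℝ^n) and let (g_α)_{α∈A} be a family of measurable functions with |g_α(x)| ≤ g(x) for all α and a.e. x, where g ∈ L^1(ℝ^n). Then the family of convolutions (f ∗ g_α)_{α∈A} is (uniformly) equicontinuous on every compact subset of ℝ^n. -/
open MeasureTheory Filter Topology

lemma aux_translate (n : ℕ) {φ : EuclideanSpace ℝ (Fin n) → ℝ} (hφ : Integrable φ) :
    Tendsto (fun h : EuclideanSpace ℝ (Fin n) => ∫ u, |φ (u + h) - φ u|) (𝓝 0) (𝓝 0) := by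
  let Φ : Lp ℝ 1 (volume : Measure (EuclideanSpace ℝ (Fin n))) := hφ.toL1 φ
  let cm : EuclideanSpace ℝ (Fin n) → C(EuclideanSpace ℝ (Fin n), EuclideanSpace ℝ (Fin n)) := fun h => ⟨fun u => u + h, by continuity⟩
  have hcm : Continuous cm := by
    apply ContinuousMap.continuous_of_continuous_uncurry
    exact continuous_snd.add continuous_fst
  have mp : ∀ h : EuclideanSpace ℝ (Fin n), MeasurePreserving (cm h) volume volume := fun h =>
    measurePreserving_add_right volume h
  let T : EuclideanSpace ℝ (Fin n) → Lp ℝ 1 (volume : Measure (EuclideanSpace ℝ (Fin n))) := fun h =>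
    Lp.compMeasurePreserving (cm h) (mp h) Φ
  have hT : Continuous T :=
    Continuous.compMeasurePreservingLp continuous_const hcm mp ENNReal.one_ne_top
  have h0 : Tendsto (fun h => ‖T h - T 0‖) (𝓝 0) (𝓝 0) :=
    tendsto_iff_norm_sub_tendsto_zero.mp (hT.tendsto 0)
  refine h0.congr fun h => ?_
  have e1 : ⇑(T h) =ᵐ[volume] fun u => φ (u + h) := by
    have := Lp.coeFn_compMeasurePreserving (f := cm h) Φ (mp h)
    refine this.trans ?_
    have : ⇑Φ =ᵐ[volume] φ := hφ.coeFn_toL1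
    exact (mp h).quasiMeasurePreserving.ae_eq this
  have e0 : ⇑(T 0) =ᵐ[volume] fun u => φ u := by
    have := Lp.coeFn_compMeasurePreserving (f := cm 0) Φ (mp 0)
    refine this.trans ?_
    have h2 : ⇑Φ =ᵐ[volume] φ := hφ.coeFn_toL1
    refine ((mp 0).quasiMeasurePreserving.ae_eq h2).trans ?_
    filter_upwards with u
    simp [cm]
  rw [L1.norm_eq_integral_norm]
  refine integral_congr_ae ?_
  filter_upwards [Lp.coeFn_sub (T h) (T 0), e1, e0] with u hu h1 h2
  rw [hu]
  simp [h1, h2, Real.norm_eq_abs]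

lemma aux_key (n : ℕ) {f G : EuclideanSpace ℝ (Fin n) → ℝ} (hf : Measurable f)
    {Cf : ℝ} (hfb : ∀ x, |f x| ≤ Cf) (hG : Integrable G) (hGpos : ∀ z, 0 ≤ G z)
    (p : EuclideanSpace ℝ (Fin n)) :
    Tendsto (fun x => ∫ z, |f (x - z) - f (p - z)| * G z) (𝓝 p) (𝓝 0) := by
  have hCf : 0 ≤ Cf := le_trans (abs_nonneg _) (hfb 0)
  set Gp : EuclideanSpace ℝ (Fin n) → ℝ := fun u => G (p - u) with hGp
  have hGpInt : Integrable Gp := hG.comp_sub_left p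
  have hGpPos : ∀ u, 0 ≤ Gp u := fun u => hGpos _
  set ψ : EuclideanSpace ℝ (Fin n) → ℝ := fun u => f u * Gp u with hψ
  have hψInt : Integrable ψ :=
    hGpInt.bdd_mul hf.aestronglyMeasurable (c := Cf) (ae_of_all _ fun x => by simpa using hfb x)
  -- rewrite the integral via the substitution z = p - u
  have hrw : ∀ x : EuclideanSpace ℝ (Fin n),
      (∫ z, |f (x - z) - f (p - z)| * G z)
        = ∫ u, |f (u + (x - p)) - f u| * Gp u := by
    intro x
    rw [← integral_sub_left_eq_self (fun u => |f (u + (x - p)) - f u| * Gp u) volume p]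
    congr 1
    ext z
    have h1 : p - z + (x - p) = x - z := by abel
    have h2 : p - (p - z) = z := by abel
    rw [h1]
    simp only [hGp]
    rw [h2]
  simp only [hrw]
  -- bound by translation integrals
  have hbound : ∀ x : EuclideanSpace ℝ (Fin n),
      (∫ u, |f (u + (x - p)) - f u| * Gp u)
        ≤ (∫ u, |ψ (u + (x - p)) - ψ u|) + Cf * ∫ u, |Gp (u + (x - p)) - Gp u| := by
    intro x
    set h := x - p
    have hfhm : Measurable (fun u : EuclideanSpace ℝ (Fin n) => f (u + h)) :=
      hf.comp (measurable_id.add_const h)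
    have hInt1 : Integrable (fun u => |f (u + h) - f u| * Gp u) :=
      hGpInt.bdd_mul ((hfhm.sub hf).abs.aestronglyMeasurable)
        (c := 2 * Cf) (ae_of_all _ fun u => by
          have := abs_sub_abs_le_abs_sub (f (u + h)) (f u)
          have h1 := hfb (u + h); have h2 := hfb u
          have : |f (u + h) - f u| ≤ |f (u + h)| + |f u| := abs_sub _ _
          simp only [Real.norm_eq_abs, abs_abs]
          linarith)
    have hψh : Integrable (fun u => ψ (u + h)) := hψInt.comp_add_right h
    have hGph : Integrable (fun u => Gp (u + h)) := hGpInt.comp_add_right h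
    have hI3 : Integrable (fun u => |ψ (u + h) - ψ u|) := by
      have := (hψh.sub hψInt).abs
      simpa using this
    have hI4 : Integrable (fun u => |Gp (u + h) - Gp u|) := by
      have := (hGph.sub hGpInt).abs
      simpa using this
    calc (∫ u, |f (u + h) - f u| * Gp u)
        ≤ ∫ u, (|ψ (u + h) - ψ u| + Cf * |Gp (u + h) - Gp u|) := ?_
      _ = (∫ u, |ψ (u + h) - ψ u|) + Cf * ∫ u, |Gp (u + h) - Gp u| := by
          rw [integral_add hI3 (hI4.const_mul Cf), integral_const_mul]
    refine integral_mono hInt1 (hI3.add (hI4.const_mul Cf)) fun u => ?_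
    have expand : (f (u + h) - f u) * Gp u
        = (ψ (u + h) - ψ u) - f (u + h) * (Gp (u + h) - Gp u) := by
      simp only [hψ]; ring
    have key : |f (u + h) - f u| * Gp u
        = |(ψ (u + h) - ψ u) - f (u + h) * (Gp (u + h) - Gp u)| := by
      rw [← expand, abs_mul, abs_of_nonneg (hGpPos u)]
    rw [key]
    calc |(ψ (u + h) - ψ u) - f (u + h) * (Gp (u + h) - Gp u)|
        ≤ |ψ (u + h) - ψ u| + |f (u + h) * (Gp (u + h) - Gp u)| := abs_sub _ _
      _ ≤ |ψ (u + h) - ψ u| + Cf * |Gp (u + h) - Gp u| := by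
          rw [abs_mul]
          exact add_le_add le_rfl (mul_le_mul_of_nonneg_right (hfb _) (abs_nonneg _))
  -- squeeze
  have hsub : Tendsto (fun x : EuclideanSpace ℝ (Fin n) => x - p) (𝓝 p) (𝓝 0) :=
    (continuous_id.sub continuous_const).tendsto' p 0 (sub_self p)
  have hb1 : Tendsto (fun x => ∫ u, |ψ (u + (x - p)) - ψ u|) (𝓝 p) (𝓝 0) :=
    (aux_translate n hψInt).comp hsub
  have hb2 : Tendsto (fun x => Cf * ∫ u, |Gp (u + (x - p)) - Gp u|) (𝓝 p) (𝓝 0) := by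
    have := ((aux_translate n hGpInt).comp hsub).const_mul Cf
    simpa using this
  have hb : Tendsto (fun x => (∫ u, |ψ (u + (x - p)) - ψ u|)
      + Cf * ∫ u, |Gp (u + (x - p)) - Gp u|) (𝓝 p) (𝓝 0) := by
    simpa using hb1.add hb2
  refine squeeze_zero (fun x => ?_) hbound hb
  exact integral_nonneg fun u => mul_nonneg (abs_nonneg _) (hGpPos u)

theorem stmt_6 (n : ℕ) {A : Type*}
    (f : EuclideanSpace ℝ (Fin n) → ℝ) (hf : Measurable f)
    (Cf : ℝ) (hfb : ∀ x, |f x| ≤ Cf)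
    (gα : A → EuclideanSpace ℝ (Fin n) → ℝ) (hgα : ∀ α, Measurable (gα α))
    (g : EuclideanSpace ℝ (Fin n) → ℝ) (hg : Integrable g)
    (hdom : ∀ α, ∀ᵐ x, |gα α x| ≤ g x) :
    ∀ (K : Set (EuclideanSpace ℝ (Fin n))), IsCompact K →
    ∀ ε : ℝ, ε > 0 → ∃ δ : ℝ, δ > 0 ∧
      ∀ (α : A), ∀ x ∈ K, ∀ y ∈ K, ‖x - y‖ < δ →
        |(∫ z, f (x - z) * gα α z) - ∫ z, f (y - z) * gα α z| < ε := by
  intro K hK ε hε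
  set G : EuclideanSpace ℝ (Fin n) → ℝ := fun z => |g z| with hGdef
  have hG : Integrable G := hg.abs
  have hGpos : ∀ z, 0 ≤ G z := fun z => abs_nonneg _
  have hdom' : ∀ α, ∀ᵐ z, |gα α z| ≤ G z := fun α => by
    filter_upwards [hdom α] with z hz using hz.trans (le_abs_self _)
  -- integrability facts
  have hgαInt : ∀ α, Integrable (gα α) := fun α =>
    hG.mono' (hgα α).aestronglyMeasurable (by
      filter_upwards [hdom' α] with z hz using by simpa using hz)
  have hfm : ∀ x : EuclideanSpace ℝ (Fin n), Measurable fun z => f (x - z) := fun x =>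
    hf.comp (measurable_id.const_sub x)
  have hprodInt : ∀ (α) (x : EuclideanSpace ℝ (Fin n)),
      Integrable (fun z => f (x - z) * gα α z) := fun α x =>
    (hgαInt α).bdd_mul (hfm x).aestronglyMeasurable (c := Cf) (ae_of_all _ fun z => by simpa using hfb _)
  set D : EuclideanSpace ℝ (Fin n) → EuclideanSpace ℝ (Fin n) → ℝ :=
    fun x y => ∫ z, |f (x - z) - f (y - z)| * G z with hD
  have hDInt : ∀ x y : EuclideanSpace ℝ (Fin n),
      Integrable (fun z => |f (x - z) - f (y - z)| * G z) := fun x y =>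
    hG.bdd_mul ((hfm x).sub (hfm y)).abs.aestronglyMeasurable
      (c := 2 * Cf) (ae_of_all _ fun z => by
        have h1 := hfb (x - z); have h2 := hfb (y - z)
        have := abs_sub (f (x - z)) (f (y - z))
        simp only [Real.norm_eq_abs, abs_abs]
        linarith)
  -- the convolution difference is bounded by D
  have hbound : ∀ (α) (x y : EuclideanSpace ℝ (Fin n)),
      |(∫ z, f (x - z) * gα α z) - ∫ z, f (y - z) * gα α z| ≤ D x y := by
    intro α x y
    rw [← integral_sub (hprodInt α x) (hprodInt α y)]
    calc |∫ z, (f (x - z) * gα α z - f (y - z) * gα α z)|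
        ≤ ∫ z, |f (x - z) * gα α z - f (y - z) * gα α z| := by
          simpa [Real.norm_eq_abs] using
            norm_integral_le_integral_norm (fun z => f (x - z) * gα α z - f (y - z) * gα α z)
      _ ≤ D x y := by
          refine integral_mono_ae (((hprodInt α x).sub (hprodInt α y)).abs) (hDInt x y) ?_
          filter_upwards [hdom' α] with z hz
          calc |f (x - z) * gα α z - f (y - z) * gα α z|
              = |f (x - z) - f (y - z)| * |gα α z| := by rw [← abs_mul]; ring_nf
            _ ≤ |f (x - z) - f (y - z)| * G z :=
                mul_le_mul_of_nonneg_left hz (abs_nonneg _)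
  -- triangle inequality for D
  have hDtri : ∀ x y p : EuclideanSpace ℝ (Fin n), D x y ≤ D x p + D y p := by
    intro x y p
    rw [hD]
    simp only
    rw [← integral_add (hDInt x p) (hDInt y p)]
    refine integral_mono (hDInt x y) ((hDInt x p).add (hDInt y p)) fun z => ?_
    have : |f (x - z) - f (y - z)| ≤ |f (x - z) - f (p - z)| + |f (y - z) - f (p - z)| := by
      rw [abs_sub_comm (f (y - z)) (f (p - z))]
      exact abs_sub_le _ _ _
    calc |f (x - z) - f (y - z)| * G z
        ≤ (|f (x - z) - f (p - z)| + |f (y - z) - f (p - z)|) * G z :=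
          mul_le_mul_of_nonneg_right this (hGpos z)
      _ = |f (x - z) - f (p - z)| * G z + |f (y - z) - f (p - z)| * G z := by ring
  -- local smallness of D via aux_key
  have hloc : ∀ p : EuclideanSpace ℝ (Fin n), ∃ r > 0,
      ∀ x : EuclideanSpace ℝ (Fin n), dist x p < r → D x p < ε / 2 := by
    intro p
    have := (aux_key n hf hfb hG hGpos p).eventually (eventually_lt_nhds (by linarith : (0:ℝ) < ε / 2))
    rw [Metric.eventually_nhds_iff] at this
    obtain ⟨r, hr, h⟩ := this
    exact ⟨r, hr, fun x hx => h hx⟩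
  choose r hr hsmall using hloc
  -- compactness argument
  rcases K.eq_empty_or_nonempty with rfl | hKne
  · exact ⟨1, one_pos, fun α x hx => absurd hx (Set.notMem_empty x)⟩
  have hcover : K ⊆ ⋃ p ∈ K, Metric.ball p (r p / 2) := fun p hp =>
    Set.mem_biUnion hp (Metric.mem_ball_self (by linarith [hr p]))
  obtain ⟨t, htK, htcover⟩ := hK.elim_nhds_subcover (fun p => Metric.ball p (r p / 2))
    (fun p _ => Metric.ball_mem_nhds p (by linarith [hr p]))
  have htne : t.Nonempty := by
    obtain ⟨x0, hx0⟩ := hKne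
    obtain ⟨p, hp, -⟩ := Set.mem_iUnion₂.mp (htcover hx0)
    exact ⟨p, hp⟩
  refine ⟨t.inf' htne (fun p => r p / 2), ?_, ?_⟩
  · rw [gt_iff_lt, Finset.lt_inf'_iff]
    exact fun p _ => by linarith [hr p]
  · intro α x hx y hy hxy
    obtain ⟨p, hpt, hxp⟩ := Set.mem_iUnion₂.mp (htcover hx)
    have hxp' : dist x p < r p / 2 := Metric.mem_ball.mp hxp
    have hδle : t.inf' htne (fun p => r p / 2) ≤ r p / 2 := Finset.inf'_le _ hpt
    have hyp : dist y p < r p := by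
      have h1 : dist y x < r p / 2 := by
        rw [dist_comm, dist_eq_norm]
        exact lt_of_lt_of_le hxy hδle
      calc dist y p ≤ dist y x + dist x p := dist_triangle _ _ _
        _ < r p / 2 + r p / 2 := add_lt_add h1 hxp'
        _ = r p := by ring
    have h3 := hsmall p x (hxp'.trans (by linarith [hr p]))
    have h4 := hsmall p y hyp
    calc |(∫ z, f (x - z) * gα α z) - ∫ z, f (y - z) * gα α z|
        ≤ D x y := hbound α x y
      _ ≤ D x p + D y p := hDtri x y p
      _ < ε / 2 + ε / 2 := add_lt_add h3 h4
      _ = ε := by ring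
end

section
/- Let u : ℝ^n → ℝ be bounded, and suppose u is semiconvex (there exists C such that u(x) + C|x|² is convex) and -v is semiconvex where v : ℝ^n → ℝ is bounded. If a C² function φ touches u - v from above at a point x (φ(x) = u(x) - v(x) and φ ≥ u - v near x), then u is punctually C^{1,1} at x from above and below: there exist a vector p and a constant M with |u(x+y) - u(x) - ⟨p,y⟩| ≤ M|y|² for all small y, and similarly for v. -/
open Set Metric

section AuxStmt10

variable {E : Type*} [NormedAddCommGroup E] [InnerProductSpace ℝ E]

lemma taylor_two' (φ : E → ℝ) (hφ : ContDiff ℝ 2 φ) (x : E) :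
    ∃ K r : ℝ, 0 ≤ K ∧ 0 < r ∧ ∀ y : E, ‖y‖ < r →
      |φ (x + y) - φ x - (fderiv ℝ φ x) y| ≤ K * ‖y‖ ^ 2 := by
  have hd : Differentiable ℝ φ := hφ.differentiable (by norm_num)
  have h1 : ContDiff ℝ 1 (fderiv ℝ φ) := hφ.fderiv_right (by norm_num)
  obtain ⟨K, t, ht, hlip⟩ := h1.contDiffAt.exists_lipschitzOnWith
  obtain ⟨r, hr, hball⟩ := Metric.mem_nhds_iff.1 ht
  refine ⟨K, r, K.coe_nonneg, hr, fun y hy => ?_⟩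
  set L := fderiv ℝ φ x with hL
  set g : E → ℝ := fun z => φ z - L z with hg
  have hxt : x ∈ t := hball (mem_ball_self hr)
  have hsball : closedBall x ‖y‖ ⊆ t := fun z hz =>
    hball (lt_of_le_of_lt (mem_closedBall.1 hz) hy)
  have hder : ∀ z ∈ closedBall x ‖y‖,
      HasFDerivWithinAt g (fderiv ℝ φ z - L) (closedBall x ‖y‖) z := fun z _ =>
    (((hd z).hasFDerivAt).sub (L.hasFDerivAt)).hasFDerivWithinAt
  have hbound : ∀ z ∈ closedBall x ‖y‖, ‖fderiv ℝ φ z - L‖ ≤ (K : ℝ) * ‖y‖ := by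
    intro z hz
    have h2 := hlip.dist_le_mul z (hsball hz) x hxt
    rw [dist_eq_norm] at h2
    calc ‖fderiv ℝ φ z - L‖ ≤ (K : ℝ) * dist z x := h2
      _ ≤ (K : ℝ) * ‖y‖ := by
          have := mem_closedBall.1 hz
          exact mul_le_mul_of_nonneg_left this K.coe_nonneg
  have h3 := (convex_closedBall x ‖y‖).norm_image_sub_le_of_norm_hasFDerivWithin_le
    hder hbound (mem_closedBall_self (norm_nonneg y))
    (by rw [mem_closedBall, dist_self_add_left])
  have h4 : g (x + y) - g x = φ (x + y) - φ x - L y := by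
    simp only [hg]
    have : L (x + y) = L x + L y := map_add L x y
    rw [this]; ring
  have h5 : ‖(x + y) - x‖ = ‖y‖ := by simp
  rw [h4, h5] at h3
  calc |φ (x + y) - φ x - L y| ≤ (K : ℝ) * ‖y‖ * ‖y‖ := h3
    _ = (K : ℝ) * ‖y‖ ^ 2 := by ring

lemma grad_eq' (p q : E) (c r : ℝ) (hr : 0 < r)
    (h : ∀ y : E, ‖y‖ < r → (inner ℝ p y : ℝ) ≤ inner ℝ q y + c * ‖y‖ ^ 2) : p = q := by
  by_contra hne
  have hw : p - q ≠ 0 := sub_ne_zero.2 hne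
  have hwn : (0:ℝ) < ‖p - q‖ := norm_pos_iff.2 hw
  set t := min (r / (2 * ‖p - q‖)) (1 / (2 * (|c| + 1))) with htdef
  have ht : 0 < t := lt_min (by positivity) (by positivity)
  have hyn : ‖t • (p - q)‖ < r := by
    rw [norm_smul, Real.norm_eq_abs, abs_of_pos ht]
    calc t * ‖p - q‖ ≤ (r / (2 * ‖p - q‖)) * ‖p - q‖ := by
          exact mul_le_mul_of_nonneg_right (min_le_left _ _) hwn.le
      _ = r / 2 := by field_simp
      _ < r := by linarith
  have hkey := h _ hyn
  rw [real_inner_smul_right, real_inner_smul_right, norm_smul,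
    Real.norm_eq_abs, abs_of_pos ht, mul_pow] at hkey
  have hip : (inner ℝ p (p - q) : ℝ) - inner ℝ q (p - q) = ‖p - q‖ ^ 2 := by
    rw [← inner_sub_left, real_inner_self_eq_norm_sq]
  have h2 : t ≤ 1 / (2 * (|c| + 1)) := min_le_right _ _
  have h3 : t * (2 * (|c| + 1)) ≤ 1 := by
    rw [← le_div_iff₀ (by positivity)]
    exact h2
  have hct : c * t ≤ 1 / 2 := by
    nlinarith [le_abs_self c, abs_nonneg c,
      mul_le_mul_of_nonneg_right (le_abs_self c) ht.le]
  have hN : (0:ℝ) < ‖p - q‖ ^ 2 := by positivity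
  nlinarith [mul_pos ht hN, hkey, hip, hct]

variable [FiniteDimensional ℝ E]

lemma exists_subgradient' (f : E → ℝ) (hf : ConvexOn ℝ Set.univ f) (x : E) :
    ∃ p : E, ∀ y, f x + (inner ℝ p (y - x) : ℝ) ≤ f y := by
  have hcont : Continuous f := by
    have h := hf.continuousOn isOpen_univ
    exact continuousOn_univ.1 h
  set S : Set (E × ℝ) := {q | f q.1 < q.2} with hSdef
  have hSopen : IsOpen S := isOpen_lt (hcont.comp continuous_fst) continuous_snd
  have hSconv : Convex ℝ S := by
    intro a ha b hb s t hs ht hst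
    simp only [hSdef, Set.mem_setOf_eq] at ha hb ⊢
    have h2 : f (s • a.1 + t • b.1) ≤ s * f a.1 + t * f b.1 :=
      hf.2 (Set.mem_univ _) (Set.mem_univ _) hs ht hst
    have h3 : s * f a.1 + t * f b.1 < s * a.2 + t * b.2 := by
      rcases eq_or_lt_of_le hs with rfl | hs'
      · have ht1 : t = 1 := by linarith
        nlinarith [hb]
      · nlinarith [mul_lt_mul_of_pos_left ha hs',
          mul_le_mul_of_nonneg_left hb.le ht]
    exact lt_of_le_of_lt h2 h3
  have hxS : (x, f x) ∉ S := by simp [hSdef]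
  obtain ⟨ℓ, hℓ⟩ := geometric_hahn_banach_open_point hSconv hSopen hxS
  set c : ℝ := ℓ (0, 1) with hc
  set L : E → ℝ := fun y => ℓ (y, 0) with hL
  have hdec : ∀ (y : E) (t : ℝ), ℓ (y, t) = L y + t * c := by
    intro y t
    have h1 : (y, t) = (y, (0:ℝ)) + t • ((0:E), (1:ℝ)) := by
      simp [Prod.ext_iff]
    rw [h1, map_add, map_smul, smul_eq_mul]
  have hcneg : c < 0 := by
    have h := hℓ (x, f x + 1) (by simp [hSdef])
    rw [hdec, hdec] at h
    nlinarith [h]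
  have hc0 : c ≠ 0 := hcneg.ne
  have key : ∀ y, L y + f y * c ≤ L x + f x * c := by
    intro y
    by_contra hcon
    push_neg at hcon
    set A := L y + f y * c with hA
    set B := L x + f x * c with hB
    set ε := (A - B) / (-c) with hε
    have hεpos : 0 < ε := div_pos (by linarith) (by linarith)
    have hmem : (y, f y + ε) ∈ S := by simp [hSdef, hεpos]
    have h4 := hℓ _ hmem
    rw [hdec, hdec] at h4
    have hm' : (0:ℝ) < -c := by linarith
    have h5 : ε * (-c) = A - B := div_mul_cancel₀ _ hm'.ne'
    nlinarith [h4, h5]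
  refine ⟨(InnerProductSpace.toDual ℝ E).symm
    ((-c)⁻¹ • (ℓ.comp (ContinuousLinearMap.inl ℝ E ℝ))), fun y => ?_⟩
  have hip : (inner ℝ ((InnerProductSpace.toDual ℝ E).symm
      ((-c)⁻¹ • (ℓ.comp (ContinuousLinearMap.inl ℝ E ℝ)))) (y - x) : ℝ)
      = (-c)⁻¹ * ℓ (y - x, 0) := by
    rw [InnerProductSpace.toDual_symm_apply]
    simp
  have hsub : ℓ (y - x, 0) = L y - L x := by
    have h : ((y - x, (0:ℝ)) : E × ℝ) = (y, 0) - (x, 0) := by simp [Prod.ext_iff]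
    rw [h, map_sub]
  have hm : (0:ℝ) < -c := by linarith
  have h6 : L y - L x ≤ (f y - f x) * (-c) := by nlinarith [key y]
  have h7 : (-c)⁻¹ * ℓ (y - x, 0) ≤ f y - f x := by
    rw [hsub, inv_mul_le_iff₀ hm]
    linarith [h6]
  rw [hip]
  linarith

end AuxStmt10

theorem stmt_10 (n : ℕ) (u v : EuclideanSpace ℝ (Fin n) → ℝ)
    (hub : ∃ C : ℝ, ∀ x, |u x| ≤ C) (hvb : ∃ C : ℝ, ∀ x, |v x| ≤ C)
    (hu : ∃ C : ℝ, ConvexOn ℝ Set.univ (fun x => u x + C * ‖x‖ ^ 2))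
    (hv : ∃ C : ℝ, ConvexOn ℝ Set.univ (fun x => -v x + C * ‖x‖ ^ 2))
    (φ : EuclideanSpace ℝ (Fin n) → ℝ) (hφ : ContDiff ℝ 2 φ)
    (x : EuclideanSpace ℝ (Fin n))
    (htouch : φ x = u x - v x ∧ ∀ᶠ y in nhds x, u y - v y ≤ φ y) :
    (∃ (p : EuclideanSpace ℝ (Fin n)) (M r : ℝ), 0 < M ∧ 0 < r ∧
      ∀ y : EuclideanSpace ℝ (Fin n), ‖y‖ < r →
        |u (x + y) - u x - (inner ℝ p y : ℝ)| ≤ M * ‖y‖ ^ 2) ∧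
    (∃ (p : EuclideanSpace ℝ (Fin n)) (M r : ℝ), 0 < M ∧ 0 < r ∧
      ∀ y : EuclideanSpace ℝ (Fin n), ‖y‖ < r →
        |v (x + y) - v x - (inner ℝ p y : ℝ)| ≤ M * ‖y‖ ^ 2) := by
  obtain ⟨Cu, hcu⟩ := hu
  obtain ⟨Cv, hcv⟩ := hv
  obtain ⟨htx, htnb⟩ := htouch
  obtain ⟨s, hs⟩ := exists_subgradient' _ hcu x
  obtain ⟨q, hq⟩ := exists_subgradient' _ hcv x
  obtain ⟨K, rT, hK0, hrT, hT⟩ := taylor_two' φ hφ x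
  rw [Metric.eventually_nhds_iff] at htnb
  obtain ⟨δ, hδ, hnear⟩ := htnb
  set d : EuclideanSpace ℝ (Fin n) :=
    (InnerProductSpace.toDual ℝ _).symm (fderiv ℝ φ x) with hd
  have hdy : ∀ y : EuclideanSpace ℝ (Fin n), (inner ℝ d y : ℝ) = fderiv ℝ φ x y :=
    fun y => InnerProductSpace.toDual_symm_apply
  set p1 : EuclideanSpace ℝ (Fin n) := s - (2*Cu) • x with hp1
  set p2 : EuclideanSpace ℝ (Fin n) := (2*Cv) • x - q with hp2
  have hn : ∀ y : EuclideanSpace ℝ (Fin n),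
      ‖x + y‖ ^ 2 = ‖x‖ ^ 2 + 2 * (inner ℝ x y : ℝ) + ‖y‖ ^ 2 := fun y => norm_add_sq_real x y
  have hlow : ∀ y, u x + (inner ℝ p1 y : ℝ) - Cu * ‖y‖ ^ 2 ≤ u (x + y) := by
    intro y
    have h1 := hs (x + y)
    simp only [add_sub_cancel_left] at h1
    have hip1 : (inner ℝ p1 y : ℝ) = inner ℝ s y - (2*Cu) * inner ℝ x y := by
      rw [hp1, inner_sub_left, real_inner_smul_left]
    have hCn : Cu * ‖x + y‖ ^ 2
        = Cu * ‖x‖ ^ 2 + 2 * Cu * (inner ℝ x y : ℝ) + Cu * ‖y‖ ^ 2 := by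
      rw [hn y]; ring
    linarith [h1]
  have hvup : ∀ y, v (x + y) ≤ v x + (inner ℝ p2 y : ℝ) + Cv * ‖y‖ ^ 2 := by
    intro y
    have h1 := hq (x + y)
    simp only [add_sub_cancel_left] at h1
    have hip2 : (inner ℝ p2 y : ℝ) = (2*Cv) * inner ℝ x y - inner ℝ q y := by
      rw [hp2, inner_sub_left, real_inner_smul_left]
    have hCn : Cv * ‖x + y‖ ^ 2
        = Cv * ‖x‖ ^ 2 + 2 * Cv * (inner ℝ x y : ℝ) + Cv * ‖y‖ ^ 2 := by
      rw [hn y]; ring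
    linarith [h1]
  set r0 := min δ rT with hr0def
  have hr0 : 0 < r0 := lt_min hδ hrT
  have hφbd : ∀ y : EuclideanSpace ℝ (Fin n), ‖y‖ < r0 →
      |φ (x + y) - φ x - (inner ℝ d y : ℝ)| ≤ K * ‖y‖ ^ 2 := by
    intro y hy
    rw [hdy y]
    exact hT y (lt_of_lt_of_le hy (min_le_right _ _))
  have hnear' : ∀ y : EuclideanSpace ℝ (Fin n), ‖y‖ < r0 →
      u (x + y) - v (x + y) ≤ φ (x + y) := by
    intro y hy
    apply hnear
    rw [dist_self_add_left]
    exact lt_of_lt_of_le hy (min_le_left _ _)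
  have hup : ∀ y : EuclideanSpace ℝ (Fin n), ‖y‖ < r0 →
      u (x + y) ≤ u x + (inner ℝ (p2 + d) y : ℝ) + (Cv + K) * ‖y‖ ^ 2 := by
    intro y hy
    have h1 := hnear' y hy
    have h2 := (abs_le.1 (hφbd y hy)).2
    have h3 := hvup y
    have h4 : (inner ℝ (p2 + d) y : ℝ) = inner ℝ p2 y + inner ℝ d y := inner_add_left _ _ _
    linarith
  have heq : p1 = p2 + d := by
    apply grad_eq' p1 (p2 + d) (Cu + Cv + K) r0 hr0
    intro y hy
    have h1 := hlow y
    have h2 := hup y hy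
    linarith
  have hM : (0:ℝ) < |Cu| + |Cv| + K + 1 := by
    have := abs_nonneg Cu
    have := abs_nonneg Cv
    linarith
  constructor
  · refine ⟨p1, |Cu| + |Cv| + K + 1, r0, hM, hr0, fun y hy => ?_⟩
    rw [abs_le]
    constructor
    · have h1 := hlow y
      nlinarith [sq_nonneg ‖y‖, le_abs_self Cu, abs_nonneg Cv,
        mul_le_mul_of_nonneg_right (le_abs_self Cu) (sq_nonneg ‖y‖)]
    · have h2 := hup y hy
      rw [heq]
      nlinarith [sq_nonneg ‖y‖, le_abs_self Cv, abs_nonneg Cu,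
        mul_le_mul_of_nonneg_right (le_abs_self Cv) (sq_nonneg ‖y‖)]
  · refine ⟨p2, |Cu| + |Cv| + K + 1, r0, hM, hr0, fun y hy => ?_⟩
    rw [abs_le]
    constructor
    · -- lower bound for v
      have h1 := hnear' y hy
      have h2 := (abs_le.1 (hφbd y hy)).2
      have h3 := hlow y
      have h4 : (inner ℝ p1 y : ℝ) = inner ℝ p2 y + inner ℝ d y := by
        rw [heq]; exact inner_add_left _ _ _
      nlinarith [sq_nonneg ‖y‖, le_abs_self Cu, abs_nonneg Cv,
        mul_le_mul_of_nonneg_right (le_abs_self Cu) (sq_nonneg ‖y‖)]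
    · have h3 := hvup y
      nlinarith [sq_nonneg ‖y‖, le_abs_self Cv, abs_nonneg Cu,
        mul_le_mul_of_nonneg_right (le_abs_self Cv) (sq_nonneg ‖y‖)]
end
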